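/- Let λ ∈ ℚ and b = den λ. Then the sequence ψ_k = b^k · ∏_{p prime, p ∣ b} p^{τ_p(k)} of positive integers satisfies: ψ_k · ⟨λ⟩_n / n! ∈ ℤ for all 0 ≤ n ≤ k and all k ∈ ℕ, and limsup_{k→∞} ψ_k^{1/k} ≤ b·e^{χ(b)}. (That is, every rational number λ satisfies the condition of cancellation of factorials with constant b·e^{χ(b)}.) -/

import Mathlib

/-- The falling factorial `⟨a⟩_n = a(a-1)⋯(a-n+1)` in a ring. -/
def fall {R : Type*} [Ring R] (a : R) : ℕ → R
  | 0 => 1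
  | n + 1 => fall a n * (a - (n : R))

/-- `χ(b) = ∑_{p ∣ b, p prime} log p / (p-1)`. -/
noncomputable def chi (b : ℕ) : ℝ := ∑ p ∈ b.primeFactors, Real.log p / ((p : ℝ) - 1)

/-- `τ_p(k)`, the exponent of the prime `p` in `k!`. -/
def tau (p k : ℕ) : ℕ := (Nat.factorial k).factorization p

def gfall (a c : ℤ) (n : ℕ) : ℤ := ∏ i ∈ Finset.range n, (a - (i : ℤ) * c)

lemma fall_eq_descPochhammer (a : ℤ) (n : ℕ) : fall a n = (descPochhammer ℤ n).eval a := by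
  induction n with
  | zero => simp [fall]
  | succ n ih => rw [descPochhammer_succ_eval]; simp [fall, ih]

lemma factorial_dvd_fall (a : ℤ) (n : ℕ) : (n.factorial : ℤ) ∣ fall a n := by
  refine ⟨Ring.choose a n, ?_⟩
  rw [fall_eq_descPochhammer, Polynomial.eval_eq_smeval,
    Ring.descPochhammer_eq_factorial_smul_choose, nsmul_eq_mul]

lemma gfall_one (a : ℤ) (n : ℕ) : gfall a 1 n = fall a n := by
  induction n with
  | zero => simp [gfall, fall]
  | succ n ih => simp [gfall, Finset.prod_range_succ, fall, ← ih]

lemma gfall_cast (q : ℚ) (n : ℕ) :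
    ((gfall q.num q.den n : ℤ) : ℚ) = (q.den : ℚ) ^ n * fall q n := by
  induction n with
  | zero => simp [gfall, fall]
  | succ n ih =>
    have hstep : gfall q.num q.den (n + 1)
        = gfall q.num q.den n * (q.num - (n : ℤ) * q.den) := Finset.prod_range_succ _ n
    have hd : ((q.den : ℚ)) * q = (q.num : ℚ) := Rat.den_mul_eq_num q
    rw [hstep, Int.cast_mul, ih]
    show _ = (q.den : ℚ) ^ (n+1) * (fall q n * (q - (n:ℚ)))
    push_cast
    linear_combination (-((q.den:ℚ)^n * fall q n)) * hd

lemma key (q : ℚ) {n k : ℕ} (hnk : n ≤ k) :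
    (n.factorial : ℤ) ∣
      (∏ p ∈ q.den.primeFactors, (p : ℤ) ^ tau p k) * gfall q.num q.den n := by
  have hb0 : q.den ≠ 0 := q.den_pos.ne'
  have hn0 : n.factorial ≠ 0 := Nat.factorial_ne_zero n
  set F := (n.factorial).primeFactors with hF
  set M := ∏ p ∈ F.filter (· ∣ q.den), p ^ (n.factorial).factorization p with hM
  set Q := ∏ p ∈ F.filter (fun p => ¬ p ∣ q.den), p ^ (n.factorial).factorization p with hQ
  have hMQ : M * Q = n.factorial := by
    rw [hM, hQ, Finset.prod_filter_mul_prod_filter_not]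
    conv_rhs => rw [← Nat.factorization_prod_pow_eq_self hn0]
    rfl
  have hcopbQ : Nat.Coprime q.den Q := by
    refine Nat.Coprime.prod_right (fun p hp => ?_)
    rw [Finset.mem_filter] at hp
    have hpp : p.Prime := Nat.prime_of_mem_primeFactors hp.1
    exact Nat.Coprime.pow_right _ ((hpp.coprime_iff_not_dvd.mpr hp.2).symm)
  have hQfac : (Q : ℤ) ∣ (n.factorial : ℤ) := by
    exact_mod_cast Int.natCast_dvd_natCast.mpr ⟨M, by rw [← hMQ, mul_comm]⟩
  have hQdvdN : (Q : ℤ) ∣ gfall q.num q.den n := by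
    obtain ⟨u, v, huv⟩ := Nat.isCoprime_iff_coprime.mpr hcopbQ
    have h1 : (u : ZMod Q) * ((q.den : ℕ) : ZMod Q) = 1 := by
      have := congrArg (fun z : ℤ => (z : ZMod Q)) huv
      push_cast at this
      simpa [ZMod.natCast_self] using this
    have hunit : IsUnit (u : ZMod Q) := IsUnit.of_mul_eq_one _ h1
    rw [← ZMod.intCast_zmod_eq_zero_iff_dvd]
    have hprod : (u : ZMod Q) ^ n * ((gfall q.num q.den n : ℤ) : ZMod Q)
        = ((fall (u * q.num) n : ℤ) : ZMod Q) := by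
      rw [← gfall_one (u * q.num) n]
      unfold gfall
      push_cast
      rw [← Finset.card_range n, ← Finset.prod_const, Finset.card_range,
        ← Finset.prod_mul_distrib]
      refine Finset.prod_congr rfl (fun i _ => ?_)
      linear_combination (-(i : ZMod Q)) * h1
    have hzero : ((fall (↑u * q.num) n : ℤ) : ZMod Q) = 0 :=
      (ZMod.intCast_zmod_eq_zero_iff_dvd _ _).mpr (hQfac.trans (factorial_dvd_fall _ n))
    have h2 := hprod.trans hzero
    exact ((hunit.pow n).mul_right_eq_zero).mp h2
  have hMdvdP : M ∣ ∏ p ∈ q.den.primeFactors, p ^ tau p k := by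
    have hsub : F.filter (· ∣ q.den) ⊆ q.den.primeFactors := fun p hp => by
      rw [Finset.mem_filter] at hp
      exact Nat.mem_primeFactors.mpr ⟨Nat.prime_of_mem_primeFactors hp.1, hp.2, hb0⟩
    have h1 : M ∣ ∏ p ∈ F.filter (· ∣ q.den), p ^ tau p k := by
      refine Finset.prod_dvd_prod_of_dvd _ _ (fun p hp => pow_dvd_pow p ?_)
      exact (Nat.factorization_le_iff_dvd hn0 (Nat.factorial_ne_zero k)).mpr
        (Nat.factorial_dvd_factorial hnk) p
    exact h1.trans (Finset.prod_dvd_prod_of_subset _ _ _ hsub)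
  have hcopMQ : Nat.Coprime M Q := by
    refine Nat.Coprime.prod_left (fun p hp => Nat.Coprime.prod_right (fun r hr => ?_))
    rw [Finset.mem_filter] at hp hr
    have hpp := Nat.prime_of_mem_primeFactors hp.1
    have hrp := Nat.prime_of_mem_primeFactors hr.1
    have hpr : p ≠ r := fun h => hr.2 (h ▸ hp.2)
    exact Nat.Coprime.pow _ _ ((Nat.coprime_primes hpp hrp).mpr hpr)
  have hMQ' : (n.factorial : ℤ) = (M : ℤ) * (Q : ℤ) := by exact_mod_cast hMQ.symm
  rw [hMQ']
  refine IsCoprime.mul_dvd (Nat.isCoprime_iff_coprime.mpr hcopMQ) ?_ ?_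
  · refine dvd_mul_of_dvd_left ?_ _
    have := Int.natCast_dvd_natCast.mpr hMdvdP
    push_cast at this
    exact this
  · exact dvd_mul_of_dvd_right hQdvdN _

lemma tau_le (p k : ℕ) (hp : p.Prime) : (p - 1) * tau p k ≤ k := by
  have : Fact p.Prime := ⟨hp⟩
  have h := sub_one_mul_padicValNat_factorial (p := p) k
  rw [tau, Nat.factorization_def _ hp, h]
  omega


/-- every rational number `λ` satisfies the condition of cancellation of
factorials with constant `b·e^{χ(b)}`, where `b = den λ`, witnessed by the sequence
`ψ_k = b^k · ∏_{p ∣ b} p^{τ_p(k)}`. -/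
theorem stmt_1 (lam : ℚ) (b : ℕ) (hb : b = lam.den)
    (ψ : ℕ → ℕ)
    (hψ : ∀ k, ψ k = b ^ k * ∏ p ∈ b.primeFactors, p ^ tau p k) :
    (∀ k, 0 < ψ k) ∧
    (∀ k : ℕ, ∀ n ≤ k, ∃ z : ℤ, (ψ k : ℚ) * fall lam n / (n.factorial : ℚ) = (z : ℚ)) ∧
    Filter.limsup (fun k => (ψ k : ℝ) ^ (1 / (k : ℝ))) Filter.atTop
      ≤ (b : ℝ) * Real.exp (chi b) := by
  subst hb
  have hbpos : 0 < lam.den := lam.den_pos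
  refine ⟨?_, ?_, ?_⟩
  · intro k
    rw [hψ k]
    exact Nat.mul_pos (Nat.pow_pos hbpos)
      (Finset.prod_pos fun p hp => Nat.pow_pos (Nat.prime_of_mem_primeFactors hp).pos)
  · intro k n hnk
    obtain ⟨z0, hz0⟩ := key lam hnk
    refine ⟨(lam.den : ℤ) ^ (k - n) * z0, ?_⟩
    rw [div_eq_iff (by exact_mod_cast Nat.factorial_ne_zero n : ((n.factorial : ℚ)) ≠ 0)]
    rw [hψ k]
    have hz0Q : (∏ p ∈ lam.den.primeFactors, (p : ℚ) ^ tau p k) * ((gfall lam.num lam.den n : ℤ) : ℚ)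
        = (n.factorial : ℚ) * (z0 : ℚ) := by
      have := congrArg (fun z : ℤ => (z : ℚ)) hz0
      push_cast at this
      simpa using this
    have hgc := gfall_cast lam n
    have hsplit : ((lam.den : ℚ)) ^ k = (lam.den : ℚ) ^ (k - n) * (lam.den : ℚ) ^ n := by
      rw [← pow_add]; congr 1; omega
    push_cast
    rw [hsplit]
    linear_combination ((lam.den : ℚ)) ^ (k - n) * hz0Q
      - ((lam.den : ℚ)) ^ (k - n) * (∏ p ∈ lam.den.primeFactors, (p : ℚ) ^ tau p k) * hgc
  · set b := lam.den
    set C := (b : ℝ) * Real.exp (chi b) with hC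
    have hC0 : 0 ≤ C := mul_nonneg (Nat.cast_nonneg _) (Real.exp_pos _).le
    have hbound : ∀ k : ℕ, 1 ≤ k → (ψ k : ℝ) ^ (1 / (k : ℝ)) ≤ C := by
      intro k hk
      have hψk : (ψ k : ℝ) ≤ C ^ k := by
        rw [hψ k]
        push_cast
        rw [hC, mul_pow, ← Real.exp_nat_mul]
        refine mul_le_mul_of_nonneg_left ?_ (by positivity)
        rw [chi, Finset.mul_sum, Real.exp_sum]
        refine Finset.prod_le_prod (fun p _ => by positivity) (fun p hp => ?_)
        have hpp := Nat.prime_of_mem_primeFactors hp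
        have hp2 : (2 : ℝ) ≤ p := by exact_mod_cast hpp.two_le
        have hp1 : (1 : ℝ) < p := by linarith
        have hlog : 0 ≤ Real.log p := Real.log_nonneg hp1.le
        have htau : (tau p k : ℝ) * ((p : ℝ) - 1) ≤ k := by
          have h := tau_le p k hpp
          have : ((p - 1 : ℕ) : ℝ) * (tau p k : ℝ) ≤ (k : ℝ) := by exact_mod_cast h
          have hcast : ((p - 1 : ℕ) : ℝ) = (p : ℝ) - 1 := by
            have := hpp.two_le; push_cast [Nat.cast_sub (by omega : 1 ≤ p)]; ring
          rw [hcast] at this; linarith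
        have hple : (p : ℝ) ^ tau p k = Real.exp ((tau p k : ℝ) * Real.log p) := by
          rw [← Real.log_pow, Real.exp_log (by positivity)]
        rw [hple]
        refine Real.exp_le_exp.mpr ?_
        rw [div_eq_mul_inv, ← mul_assoc]
        rw [mul_comm (k : ℝ) (Real.log p), mul_assoc, mul_comm (Real.log p)]
        refine mul_le_mul_of_nonneg_right ?_ hlog
        rw [le_mul_inv_iff₀ (by linarith : (0:ℝ) < (p:ℝ) - 1)] at *
        · exact htau
      calc (ψ k : ℝ) ^ (1 / (k : ℝ)) ≤ (C ^ k) ^ (1 / (k : ℝ)) :=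
            Real.rpow_le_rpow (Nat.cast_nonneg _) hψk (by positivity)
        _ = C := by
            rw [← Real.rpow_natCast C k, ← Real.rpow_mul hC0,
              mul_one_div_cancel (by exact_mod_cast Nat.one_le_iff_ne_zero.mp hk : (k:ℝ) ≠ 0),
              Real.rpow_one]
    refine Filter.limsup_le_of_le
      (Filter.isCoboundedUnder_le_of_le Filter.atTop
        (fun k => Real.rpow_nonneg (Nat.cast_nonneg _) _)) ?_
    exact Filter.eventually_atTop.mpr ⟨1, hbound⟩
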